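/- Let (x_{ij})_{1≤i,j≤n} be i.i.d. random variables with the exponential distribution of rate 1, set p_{ij} = x_{ij}/∑_{k=1}^{n} x_{ik}, so 𝔓 = (p_{ij}) is a random row-stochastic matrix. Then rank(𝔓 − I) = n − 1 with high probability; that is, for every D > 0 there exists n₀(D) such that for all n ≥ n₀, ℙ(rank(𝔓 − I) = n − 1) ≥ 1 − n^{-D}. -/

import Mathlib

open MeasureTheory ProbabilityTheory Matrix

/-- The random row-stochastic matrix `𝔓` with entries `p i j = y i j / ∑ₖ y i k`. -/
noncomputable def Pmat {n : ℕ} (y : Fin n → Fin n → ℝ) : Matrix (Fin n) (Fin n) ℝ :=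
  Matrix.of fun i j => y i j / ∑ k, y i k

/-- Kernel of `P - 1` for a positive row-stochastic matrix is the span of the all-ones
vector (maximum principle / Perron–Frobenius). -/
lemma ker_pos_stochastic {n : ℕ} (P : Matrix (Fin n) (Fin n) ℝ)
    (hpos : ∀ i j, 0 < P i j) (hrow : ∀ i, ∑ j, P i j = 1) :
    LinearMap.ker (P - 1).mulVecLin = Submodule.span ℝ {(fun _ => (1 : ℝ))} := by
  apply le_antisymm
  · intro v hv
    simp only [LinearMap.mem_ker, mulVecLin_apply, sub_mulVec, one_mulVec,
      sub_eq_zero] at hv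
    -- v satisfies P.mulVec v = v
    rcases isEmpty_or_nonempty (Fin n) with hempty | hne
    · have : v = (0 : ℝ) • (fun _ => (1 : ℝ)) := by
        funext i; exact absurd ⟨i⟩ (not_nonempty_iff.mpr hempty)
      rw [this]
      exact Submodule.smul_mem _ _ (Submodule.mem_span_singleton_self _)
    obtain ⟨i₀, -, hi₀⟩ := Finset.exists_max_image Finset.univ v ⟨Classical.arbitrary _,
      Finset.mem_univ _⟩
    have hconst : ∀ j, v j = v i₀ := by
      have h1 : ∑ j, P i₀ j * v j = ∑ j, P i₀ j * v i₀ := by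
        have := congrFun hv i₀
        simp only [mulVec, dotProduct] at this
        rw [this, ← Finset.sum_mul, hrow, one_mul]
      have hle : ∀ j ∈ Finset.univ, P i₀ j * v j ≤ P i₀ j * v i₀ := fun j _ =>
        mul_le_mul_of_nonneg_left (hi₀ j (Finset.mem_univ j)) (hpos i₀ j).le
      intro j
      have := (Finset.sum_eq_sum_iff_of_le hle).mp h1 j (Finset.mem_univ j)
      exact mul_left_cancel₀ (hpos i₀ j).ne' this
    have : v = (v i₀) • (fun _ => (1 : ℝ)) := by
      funext j; simp [hconst j]
    rw [this]
    exact Submodule.smul_mem _ _ (Submodule.mem_span_singleton_self _)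
  · rw [Submodule.span_le, Set.singleton_subset_iff]
    simp only [SetLike.mem_coe, LinearMap.mem_ker, mulVecLin_apply, sub_mulVec, one_mulVec,
      sub_eq_zero]
    funext i
    simp [mulVec, dotProduct, hrow i]

/-- If all entries of `y` are positive, then `rank (Pmat y - 1) = n - 1`. -/
lemma rank_Pmat_sub_one {n : ℕ} (y : Fin n → Fin n → ℝ) (hy : ∀ i j, 0 < y i j) :
    (Pmat y - 1).rank = n - 1 := by
  rcases Nat.eq_zero_or_pos n with hn | hn
  · subst hn
    have : LinearMap.range (Pmat y - 1).mulVecLin = ⊥ :=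
      Subsingleton.elim _ _
    simp [Matrix.rank, this]
    exact Subsingleton.elim _ _
  have hne : Nonempty (Fin n) := ⟨⟨0, hn⟩⟩
  have hsum : ∀ i, 0 < ∑ k, y i k := fun i =>
    Finset.sum_pos (fun k _ => hy i k) Finset.univ_nonempty
  have hpos : ∀ i j, 0 < Pmat y i j := fun i j => div_pos (hy i j) (hsum i)
  have hrow : ∀ i, ∑ j, Pmat y i j = 1 := by
    intro i
    simp only [Pmat, Matrix.of_apply, div_eq_mul_inv, ← Finset.sum_mul]
    exact mul_inv_cancel₀ (hsum i).ne'
  have hker := ker_pos_stochastic (Pmat y) hpos hrow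
  have hdim : Module.finrank ℝ (LinearMap.ker (Pmat y - 1).mulVecLin) = 1 := by
    rw [hker, finrank_span_singleton]
    intro h
    have := congrFun h (Classical.arbitrary (Fin n))
    simp at this
  have hrn := LinearMap.finrank_range_add_finrank_ker (Pmat y - 1).mulVecLin
  have hdom : Module.finrank ℝ (Fin n → ℝ) = n := by simp
  rw [hdim, hdom] at hrn
  have : (Pmat y - 1).rank = Module.finrank ℝ (LinearMap.range (Pmat y - 1).mulVecLin) := rfl
  omega

/-- For the random row-stochastic matrix `𝔓` built from i.i.d. rate-1
exponential variables, `rank (𝔓 - I) = n - 1` with high probability: for every `D > 0`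
there is `n₀` such that for all `n ≥ n₀`, `ℙ(rank (𝔓 - I) = n - 1) ≥ 1 - n^(-D)`. -/
theorem stmt14
    (Ω : ℕ → Type) [∀ n, MeasurableSpace (Ω n)]
    (μ : ∀ n, Measure (Ω n)) [∀ n, IsProbabilityMeasure (μ n)]
    (x : ∀ n, Fin n → Fin n → Ω n → ℝ)
    (hmeas : ∀ n i j, Measurable (x n i j))
    (hdist : ∀ n i j, (μ n).map (x n i j) = ProbabilityTheory.expMeasure 1)
    (hindep : ∀ n, iIndepFun
      (fun p : Fin n × Fin n => x n p.1 p.2) (μ n)) :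
    ∀ D > (0 : ℝ), ∃ n₀ : ℕ, ∀ n ≥ n₀,
      1 - ENNReal.ofReal ((n : ℝ) ^ (-D)) ≤
        μ n {ω | (Pmat (fun i j => x n i j ω) - 1).rank = n - 1} := by
  intro D hD
  refine ⟨0, fun n _ => ?_⟩
  -- The event that all entries are positive has probability 1.
  have hnull : ∀ i j, μ n {ω | x n i j ω ≤ 0} = 0 := by
    intro i j
    have : {ω | x n i j ω ≤ 0} = x n i j ⁻¹' Set.Iic 0 := rfl
    rw [this, ← Measure.map_apply (hmeas n i j) measurableSet_Iic, hdist n i j]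
    have : (expMeasure 1) (Set.Iic 0) = ∫⁻ y in Set.Iic (0:ℝ), exponentialPDF 1 y := by
      rw [expMeasure, gammaMeasure, withDensity_apply _ measurableSet_Iic]
      rfl
    rw [this, lintegral_exponentialPDF_eq_antiDeriv one_pos 0]
    simp
  set E : Set (Ω n) := {ω | ∀ i j, 0 < x n i j ω} with hE
  have hEc : μ n Eᶜ = 0 := by
    have hsub : Eᶜ ⊆ ⋃ (i : Fin n) (j : Fin n), {ω | x n i j ω ≤ 0} := by
      intro ω hω
      simp only [hE, Set.mem_compl_iff, Set.mem_setOf_eq, not_forall, not_lt] at hω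
      obtain ⟨i, j, h⟩ := hω
      exact Set.mem_iUnion.mpr ⟨i, Set.mem_iUnion.mpr ⟨j, h⟩⟩
    exact measure_mono_null hsub (measure_iUnion_null fun i => measure_iUnion_null fun j =>
      hnull i j)
  have hEsub : E ⊆ {ω | (Pmat (fun i j => x n i j ω) - 1).rank = n - 1} := by
    intro ω hω
    exact rank_Pmat_sub_one _ hω
  have h1 : (1 : ENNReal) ≤ μ n {ω | (Pmat (fun i j => x n i j ω) - 1).rank = n - 1} := by
    have : (1 : ENNReal) = μ n Set.univ := (measure_univ).symm
    rw [this]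
    calc μ n Set.univ ≤ μ n E + μ n Eᶜ := by
          rw [← Set.union_compl_self E]; exact measure_union_le _ _
      _ = μ n E := by rw [hEc, add_zero]
      _ ≤ _ := measure_mono hEsub
  exact le_trans (tsub_le_self.trans h1) le_rfl
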